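/- arXiv:math/0606111 — 5 statements merged into one kernel-verified Lean document; each statement's English description precedes it below -/
import Mathlib

section
/- Define the tilesets T_k = closure(C_{k-1} \ C_k) for k ≥ 1. Then each T_k is the closure of its interior. -/
open Set

/-- A convex set with nonempty interior is contained in the closure of its interior. -/
lemma aux_convex_subset_closure_interior {E : Type*} [NormedAddCommGroup E] [NormedSpace ℝ E]
    {s : Set E} (hs : Convex ℝ s) (hne : (interior s).Nonempty) :
    s ⊆ closure (interior s) := by
  intro x hx
  obtain ⟨y, hy⟩ := hne
  have htend : Filter.Tendsto (fun t : ℝ => x + t • (y - x)) (nhdsWithin 0 (Ioi 0)) (nhds x) := by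
    have hc : Continuous fun t : ℝ => x + t • (y - x) := by continuity
    have := hc.tendsto 0
    simpa using this.mono_left nhdsWithin_le_nhds
  refine mem_closure_of_tendsto htend ?_
  filter_upwards [Ioc_mem_nhdsGT_of_mem (by constructor <;> norm_num : (0:ℝ) ∈ Ico (0:ℝ) 1)]
    with t ht
  exact hs.add_smul_sub_mem_interior hx hy ht

lemma aux_sum_pad {M : Type*} [AddCommMonoid M] {m n : ℕ} (h : m ≤ n) (f : Fin m → M) :
    ∑ i : Fin n, (if hi : (i : ℕ) < m then f ⟨i, hi⟩ else 0) = ∑ j : Fin m, f j := by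
  rw [Fin.sum_univ_eq_sum_range (fun k => if hk : k < m then f ⟨k, hk⟩ else 0) n]
  have hr : (∑ j : Fin m, f j)
      = ∑ k ∈ Finset.range m, (fun k => if hk : k < m then f ⟨k, hk⟩ else 0) k := by
    rw [← Fin.sum_univ_eq_sum_range (fun k => if hk : k < m then f ⟨k, hk⟩ else 0) m]
    exact Finset.sum_congr rfl fun j _ => by rw [dif_pos j.isLt]
  rw [hr]
  exact (Finset.sum_subset (Finset.range_subset_range.mpr h)
    (fun k _ hk => by rw [Finset.mem_range, not_lt] at hk; exact dif_neg (not_lt.mpr hk))).symm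

/-- The convex hull of a compact set in a finite-dimensional normed space is compact. -/
lemma aux_isCompact_convexHull {E : Type*} [NormedAddCommGroup E] [NormedSpace ℝ E]
    [FiniteDimensional ℝ E] {s : Set E} (hs : IsCompact s) :
    IsCompact (convexHull ℝ s) := by
  classical
  set n : ℕ := Module.finrank ℝ E + 1 with hn
  rcases s.eq_empty_or_nonempty with rfl | hsne
  · simpa using isCompact_empty
  have hKc : IsCompact ((stdSimplex ℝ (Fin n)) ×ˢ (Set.univ.pi fun _ : Fin n => s)) :=
    (isCompact_stdSimplex ℝ _).prod (isCompact_univ_pi fun _ => hs)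
  have hgc : Continuous fun p : (Fin n → ℝ) × (Fin n → E) => ∑ i, p.1 i • p.2 i :=
    continuous_finset_sum _ fun i _ =>
      ((continuous_apply i).comp continuous_fst).smul ((continuous_apply i).comp continuous_snd)
  have himg : convexHull ℝ s =
      (fun p : (Fin n → ℝ) × (Fin n → E) => ∑ i, p.1 i • p.2 i) ''
        ((stdSimplex ℝ (Fin n)) ×ˢ (Set.univ.pi fun _ : Fin n => s)) := by
    apply Set.Subset.antisymm
    · intro x hx
      obtain ⟨ι, hι, z, w, hzs, hindep, hwpos, hwsum, hwz⟩ :=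
        eq_pos_convex_span_of_mem_convexHull hx
      letI := hι
      have hne : Nonempty ι := by
        by_contra h
        rw [not_nonempty_iff] at h
        simp [Finset.univ_eq_empty] at hwsum
      have hcard : Fintype.card ι ≤ n := by
        calc Fintype.card ι ≤ Module.finrank ℝ (vectorSpan ℝ (Set.range z)) + 1 :=
              hindep.card_le_finrank_succ
          _ ≤ Module.finrank ℝ E + 1 := by
              have := Submodule.finrank_le (vectorSpan ℝ (Set.range z))
              omega
      set m : ℕ := Fintype.card ι with hm
      obtain ⟨i₀⟩ := hne
      let e : ι ≃ Fin m := Fintype.equivFin ι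
      set w' : Fin n → ℝ := fun i => if h : (i : ℕ) < m then w (e.symm ⟨i, h⟩) else 0 with hw'
      set z' : Fin n → E := fun i => if h : (i : ℕ) < m then z (e.symm ⟨i, h⟩) else z i₀ with hz'
      have hsum1 : (∑ i : Fin n, w' i • z' i) = ∑ j : ι, w j • z j := by
        have heach : ∀ i : Fin n, w' i • z' i =
            if hi : (i : ℕ) < m then
              (fun j : Fin m => w (e.symm j) • z (e.symm j)) ⟨i, hi⟩ else 0 := by
          intro i
          by_cases h : (i : ℕ) < m <;> simp [hw', hz', h]
        rw [Finset.sum_congr rfl fun i _ => heach i]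
        exact (aux_sum_pad hcard fun j : Fin m => w (e.symm j) • z (e.symm j)).trans
          (Equiv.sum_comp e.symm fun j => w j • z j)
      have hsum2 : (∑ i : Fin n, w' i) = ∑ j : ι, w j := by
        have heach : ∀ i : Fin n, w' i =
            if hi : (i : ℕ) < m then (fun j : Fin m => w (e.symm j)) ⟨i, hi⟩ else 0 := by
          intro i
          by_cases h : (i : ℕ) < m <;> simp [hw', h]
        rw [Finset.sum_congr rfl fun i _ => heach i]
        exact (aux_sum_pad hcard fun j : Fin m => w (e.symm j)).trans
          (Equiv.sum_comp e.symm fun j => w j)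
      have hmem : (w', z') ∈ (stdSimplex ℝ (Fin n)) ×ˢ (Set.univ.pi fun _ : Fin n => s) := by
        refine ⟨⟨fun i => ?_, by rw [hsum2, hwsum]⟩, fun i _ => ?_⟩
        · by_cases h : (i : ℕ) < m
          · simp only [hw', dif_pos h]; exact (hwpos _).le
          · simp [hw', dif_neg h]
        · by_cases h : (i : ℕ) < m
          · simp only [hz', dif_pos h]; exact hzs ⟨_, rfl⟩
          · simp only [hz', dif_neg h]; exact hzs ⟨_, rfl⟩
      exact ⟨(w', z'), hmem, by rw [show (fun p : (Fin n → ℝ) × (Fin n → E) =>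
        ∑ i, p.1 i • p.2 i) (w', z') = ∑ i : Fin n, w' i • z' i from rfl, hsum1]; exact hwz⟩
    · rintro x ⟨⟨w, z⟩, ⟨hw, hz⟩, rfl⟩
      exact (convex_convexHull ℝ s).sum_mem (fun i _ => hw.1 i) hw.2
        (fun i _ => subset_convexHull ℝ s (hz i (Set.mem_univ i)))
  rw [himg]
  exact hKc.image hgc

/-- A bijective affine self-map of a finite-dimensional normed space is an open map. -/
lemma aux_affine_isOpenMap {E : Type*} [NormedAddCommGroup E] [NormedSpace ℝ E]
    [FiniteDimensional ℝ E] (f : E →ᵃ[ℝ] E) (hf : Function.Bijective f) :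
    IsOpenMap f := by
  have hlin : Function.Bijective f.linear := f.linear_bijective_iff.mpr hf
  let e : E ≃ₗ[ℝ] E := LinearEquiv.ofBijective f.linear hlin
  have he : IsOpenMap e := e.toContinuousLinearEquiv.toHomeomorph.isOpenMap
  have hdec : (f : E → E) = (fun z => z + f 0) ∘ (e : E → E) := by
    funext z
    simp only [Function.comp_apply]
    conv_lhs => rw [f.decomp]
    rfl
  rw [hdec]
  exact (Homeomorph.addRight (f 0)).isOpenMap.comp he

theorem stmt10 (d J : ℕ)
    (Φ : Fin J → (EuclideanSpace ℝ (Fin d) →ᵃ[ℝ] EuclideanSpace ℝ (Fin d)))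
    (r : Fin J → NNReal) (hr : ∀ j, r j < 1)
    (hlip : ∀ j, LipschitzWith (r j) (Φ j))
    (F : Set (EuclideanSpace ℝ (Fin d)))
    (hFne : F.Nonempty) (hFc : IsCompact F)
    (hFinv : F = ⋃ j, (Φ j) '' F)
    (hbij : ∀ j, Function.Bijective (Φ j))
    (C : ℕ → Set (EuclideanSpace ℝ (Fin d)))
    (hC0 : C 0 = convexHull ℝ F)
    (hCsucc : ∀ k, C (k + 1) = ⋃ j, (Φ j) '' C k)
    (hnt : (interior (convexHull ℝ F)).Nonempty)
    (hnontrivial : C 1 ≠ C 0)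
    (hts : ∀ j ℓ, j ≠ ℓ → interior ((Φ j) '' convexHull ℝ F) ∩ interior ((Φ ℓ) '' convexHull ℝ F) = ∅) :
    ∀ k, closure (C k \ C (k + 1)) =
      closure (interior (closure (C k \ C (k + 1)))) := by
  have hcont : ∀ j, Continuous (Φ j) := fun j => (hlip j).continuous
  have hopen : ∀ j, IsOpenMap (Φ j) := fun j => aux_affine_isOpenMap (Φ j) (hbij j)
  -- each C k is compact
  have hcomp : ∀ k, IsCompact (C k) := by
    intro k
    induction k with
    | zero => rw [hC0]; exact aux_isCompact_convexHull hFc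
    | succ n ih =>
      rw [hCsucc n]
      exact isCompact_iUnion fun j => ih.image (hcont j)
  -- each C k is contained in the closure of its interior
  have hreg : ∀ k, C k ⊆ closure (interior (C k)) := by
    intro k
    induction k with
    | zero =>
      rw [hC0]
      exact aux_convex_subset_closure_interior (convex_convexHull ℝ F) hnt
    | succ n ih =>
      rw [hCsucc n]
      intro x hx
      obtain ⟨j, y, hy, rfl⟩ := by simpa using hx
      have h1 : Φ j y ∈ Φ j '' closure (interior (C n)) := ⟨y, ih hy, rfl⟩
      have h2 : Φ j '' closure (interior (C n)) ⊆ closure (Φ j '' interior (C n)) :=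
        image_closure_subset_closure_image (hcont j)
      have h3 : Φ j '' interior (C n) ⊆ interior (⋃ i, Φ i '' C n) := by
        apply interior_maximal _ ((hopen j) _ isOpen_interior)
        exact (image_mono interior_subset).trans (subset_iUnion (fun i => Φ i '' C n) j)
      exact closure_mono h3 (h2 h1)
  intro k
  apply Set.eq_of_subset_of_subset
  · -- main inclusion
    apply closure_minimal _ isClosed_closure
    intro x hx
    have hclosed : IsClosed (C (k + 1)) := (hcomp (k + 1)).isClosed
    -- the open set U
    set U : Set (EuclideanSpace ℝ (Fin d)) := interior (C k) \ C (k + 1) with hU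
    have hUopen : IsOpen U := isOpen_interior.sdiff hclosed
    have hUsub : U ⊆ closure (C k \ C (k + 1)) :=
      (diff_subset_diff_left interior_subset).trans subset_closure
    have hUint : U ⊆ interior (closure (C k \ C (k + 1))) := interior_maximal hUsub hUopen
    -- x is in closure U
    have hxU : x ∈ closure U := by
      have hx1 : x ∈ (C (k + 1))ᶜ ∩ closure (interior (C k)) :=
        ⟨hx.2, hreg k hx.1⟩
      have := (hclosed.isOpen_compl).inter_closure hx1
      refine closure_mono ?_ this
      intro z hz
      exact ⟨hz.2, hz.1⟩
    exact closure_mono hUint hxU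
  · exact (closure_mono interior_subset).trans (by rw [closure_closure])
end

section
/- closure(C \ Φ(C)) = closure(interior(C \ Φ(C))), and ∂(C \ Φ(C)) = ∂(interior(C \ Φ(C))). -/
open Set Finset

private lemma pad_sum {M : Type*} [AddCommMonoid M] {m N : ℕ} (hm : m ≤ N) (g : Fin m → M) :
    (∑ i : Fin N, if h : (i : ℕ) < m then g ⟨i, h⟩ else 0) = ∑ j : Fin m, g j := by
  set f : ℕ → M := fun n => if h : n < m then g ⟨n, h⟩ else 0 with hf
  have h1 : (∑ i : Fin N, if h : (i : ℕ) < m then g ⟨i, h⟩ else 0) = ∑ i ∈ Finset.range N, f i :=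
    Fin.sum_univ_eq_sum_range f N
  have h2 : ∑ i ∈ Finset.range m, f i = ∑ i ∈ Finset.range N, f i := by
    apply Finset.sum_subset (Finset.range_subset_range.2 hm)
    intro x _ hx
    rw [hf]
    exact dif_neg (by simpa using hx)
  have h3 : ∑ j : Fin m, g j = ∑ i ∈ Finset.range m, f i := by
    rw [← Fin.sum_univ_eq_sum_range f m]
    refine Finset.sum_congr rfl fun j _ => ?_
    rw [hf]
    simp [dif_pos j.2]
  rw [h1, ← h2, h3]

private lemma compact_hull {E : Type*} [NormedAddCommGroup E] [NormedSpace ℝ E]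
    [FiniteDimensional ℝ E] {s : Set E} (hs : IsCompact s) (hne : s.Nonempty) :
    IsCompact (convexHull ℝ s) := by
  obtain ⟨x0, hx0⟩ := hne
  set N : ℕ := Module.finrank ℝ E + 1 with hN
  set f : (Fin N → ℝ) × (Fin N → E) → E := fun p => ∑ i, p.1 i • p.2 i with hfdef
  set T : Set ((Fin N → ℝ) × (Fin N → E)) :=
    stdSimplex ℝ (Fin N) ×ˢ (Set.univ.pi fun _ => s) with hT
  have hTc : IsCompact T := (isCompact_stdSimplex (𝕜 := ℝ) (ι := Fin N)).prod (isCompact_univ_pi fun _ => hs)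
  have hfc : Continuous f := by
    apply continuous_finset_sum
    intro i _
    exact ((continuous_apply i).comp continuous_fst).smul
      ((continuous_apply i).comp continuous_snd)
  have heq : convexHull ℝ s = f '' T := by
    apply Set.Subset.antisymm
    · intro x hx
      obtain ⟨ι, hι, z, w, hzs, hindep, hwpos, hwsum, hwx⟩ :=
        eq_pos_convex_span_of_mem_convexHull hx
      have hcard : Fintype.card ι ≤ N :=
        hindep.card_le_finrank_succ.trans (by
          rw [hN]
          exact Nat.add_le_add_right (Submodule.finrank_le _) 1)
      set m := Fintype.card ι with hm
      set e : ι ≃ Fin m := Fintype.equivFin ι with he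
      set w' : Fin N → ℝ := fun i => if h : (i : ℕ) < m then w (e.symm ⟨i, h⟩) else 0 with hw'
      set z' : Fin N → E := fun i => if h : (i : ℕ) < m then z (e.symm ⟨i, h⟩) else x0 with hz'
      refine ⟨(w', z'), ⟨⟨fun i => ?_, ?_⟩, fun i _ => ?_⟩, ?_⟩
      · rw [hw']; dsimp only
        split
        · exact (hwpos _).le
        · exact le_refl 0
      · rw [hw']
        exact ((pad_sum hcard (fun j => w (e.symm j))).trans
          (Equiv.sum_comp e.symm w)).trans hwsum
      · rw [hz']; dsimp only
        split
        · exact hzs (Set.mem_range_self _)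
        · exact hx0
      · rw [hfdef]; dsimp only
        have : (∑ i : Fin N, w' i • z' i)
            = ∑ i : Fin N, if h : (i : ℕ) < m then
                (fun j => w (e.symm j) • z (e.symm j)) ⟨i, h⟩ else 0 := by
          refine Finset.sum_congr rfl fun i _ => ?_
          rw [hw', hz']
          by_cases h : (i : ℕ) < m
          · simp [dif_pos h]
          · simp [dif_neg h]
        exact ((this.trans (pad_sum hcard (fun j => w (e.symm j) • z (e.symm j)))).trans
          (Equiv.sum_comp e.symm (fun j => w j • z j))).trans hwx
    · rintro _ ⟨⟨w, z⟩, ⟨⟨hwpos, hwsum⟩, hz⟩, rfl⟩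
      exact (convex_convexHull ℝ s).sum_mem (fun i _ => hwpos i) hwsum
        (fun i _ => subset_convexHull ℝ s (hz i (Set.mem_univ i)))
  rw [heq]
  exact hTc.image hfc

theorem stmt13 (d J : ℕ)
    (Φ : Fin J → (EuclideanSpace ℝ (Fin d) →ᵃ[ℝ] EuclideanSpace ℝ (Fin d)))
    (r : Fin J → NNReal) (hr : ∀ j, r j < 1)
    (hlip : ∀ j, LipschitzWith (r j) (Φ j))
    (F : Set (EuclideanSpace ℝ (Fin d)))
    (hFne : F.Nonempty) (hFc : IsCompact F)
    (hFinv : F = ⋃ j, (Φ j) '' F)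
    (hbij : ∀ j, Function.Bijective (Φ j))
    (hnt : (interior (convexHull ℝ F)).Nonempty) :
    closure (convexHull ℝ F \ ⋃ j, (Φ j) '' convexHull ℝ F) =
      closure (interior (convexHull ℝ F \ ⋃ j, (Φ j) '' convexHull ℝ F)) ∧
    frontier (convexHull ℝ F \ ⋃ j, (Φ j) '' convexHull ℝ F) =
      frontier (interior (convexHull ℝ F \ ⋃ j, (Φ j) '' convexHull ℝ F)) := by
  set C : Set (EuclideanSpace ℝ (Fin d)) := convexHull ℝ F with hC
  set K : Set (EuclideanSpace ℝ (Fin d)) := ⋃ j, (Φ j) '' C with hK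
  have hCc : IsCompact C := compact_hull hFc hFne
  have hKcl : IsClosed K := by
    apply isClosed_iUnion_of_finite
    intro j
    exact (hCc.image (hlip j).continuous).isClosed
  have hconv : Convex ℝ C := convex_convexHull ℝ F
  obtain ⟨y, hy⟩ := hnt
  have key : C \ K ⊆ closure (interior (C \ K)) := by
    intro x hx
    have hopen : IsOpen (interior C ∩ Kᶜ) := isOpen_interior.inter hKcl.isOpen_compl
    have hsub : interior C ∩ Kᶜ ⊆ interior (C \ K) :=
      hopen.subset_interior_iff.2 (fun z hz => ⟨interior_subset hz.1, hz.2⟩)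
    refine closure_mono hsub ?_
    have hf : Continuous fun t : ℝ => t • y + (1 - t) • x :=
      (continuous_id.smul continuous_const).add
        ((continuous_const.sub continuous_id).smul continuous_const)
    have h0 : (fun t : ℝ => t • y + (1 - t) • x) 0 = x := by simp
    haveI hne : (nhdsWithin (0:ℝ) (Set.Ioo 0 1)).NeBot := by
      apply mem_closure_iff_nhdsWithin_neBot.1
      rw [closure_Ioo one_ne_zero.symm]
      exact ⟨le_refl 0, zero_le_one⟩
    have htend : Filter.Tendsto (fun t : ℝ => t • y + (1 - t) • x)
        (nhdsWithin 0 (Set.Ioo 0 1)) (nhds x) := by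
      have := (hf.tendsto 0).mono_left
        (nhdsWithin_le_nhds : nhdsWithin (0:ℝ) (Set.Ioo 0 1) ≤ nhds 0)
      simpa using this
    refine mem_closure_of_tendsto htend ?_
    have h1 : ∀ᶠ t in nhdsWithin (0:ℝ) (Set.Ioo 0 1),
        (t • y + (1 - t) • x) ∈ interior C := by
      filter_upwards [self_mem_nhdsWithin] with t ht
      exact hconv.combo_interior_self_mem_interior hy hx.1 ht.1 (by linarith [ht.2]) (by ring)
    have h2 : ∀ᶠ t in nhdsWithin (0:ℝ) (Set.Ioo 0 1),
        (t • y + (1 - t) • x) ∈ Kᶜ := htend (hKcl.isOpen_compl.mem_nhds hx.2)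
    filter_upwards [h1, h2] with t ht1 ht2 using ⟨ht1, ht2⟩
  have hcl : closure (C \ K) = closure (interior (C \ K)) :=
    le_antisymm (closure_minimal key isClosed_closure)
      (closure_mono interior_subset)
  refine ⟨hcl, ?_⟩
  rw [frontier, frontier, interior_interior, hcl]
end

section
/- Each tileset is the image under Φ of its predecessor: Φ(T_k) = T_{k+1} for all k ≥ 1, where T_k = closure(C_{k-1} \ C_k). -/
open Set Finset

theorem affine_homeo' {d : ℕ} (f : EuclideanSpace ℝ (Fin d) →ᵃ[ℝ] EuclideanSpace ℝ (Fin d))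
    (hf : Function.Bijective f) :
    ∃ h : EuclideanSpace ℝ (Fin d) ≃ₜ EuclideanSpace ℝ (Fin d), ⇑h = ⇑f := by
  have hd : ⇑f = fun x => f.linear x + f 0 := by
    funext x
    conv_lhs => rw [f.decomp]
    simp
  have hL : Function.Bijective f.linear := by
    have : ⇑f.linear = (fun y => y - f 0) ∘ ⇑f := by
      funext x; rw [hd]; simp
    rw [this]
    exact (Equiv.subRight (f 0)).bijective.comp hf
  let e := LinearEquiv.ofBijective f.linear hL
  have hopen : IsOpenMap ⇑f := by
    have h1 : IsOpenMap ⇑f.linear := by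
      have := e.toContinuousLinearEquiv.toHomeomorph.isOpenMap
      exact this
    have h2 : IsOpenMap fun x : EuclideanSpace ℝ (Fin d) => x + f 0 := isOpenMap_add_right _
    rw [hd]
    exact h2.comp h1
  have hcont : Continuous ⇑f := f.continuous_of_finiteDimensional
  exact ⟨(Equiv.ofBijective f hf).toHomeomorphOfContinuousOpen hcont hopen, rfl⟩

theorem mem_closure_interior_of_convex' {E : Type*} [NormedAddCommGroup E] [NormedSpace ℝ E]
    {s : Set E} (hs : Convex ℝ s) (hne : (interior s).Nonempty) {x : E} (hx : x ∈ s) :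
    x ∈ closure (interior s) := by
  obtain ⟨y, hy⟩ := hne
  rw [Metric.mem_closure_iff]
  intro ε hε
  set N := ‖y - x‖ with hN
  have hN0 : 0 ≤ N := norm_nonneg _
  set t : ℝ := min 1 (ε / (N + 1)) with ht
  have ht0 : 0 < t := lt_min one_pos (div_pos hε (by positivity))
  have ht1 : t ≤ 1 := min_le_left _ _
  refine ⟨x + t • (y - x), hs.add_smul_sub_mem_interior hx hy ⟨ht0, ht1⟩, ?_⟩
  have : dist x (x + t • (y - x)) = t * N := by
    rw [dist_eq_norm]
    simp [norm_smul, abs_of_pos ht0, hN]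
  rw [this]
  have h2 : t ≤ ε / (N + 1) := min_le_right _ _
  have h3 : t * N ≤ ε / (N + 1) * N := mul_le_mul_of_nonneg_right h2 hN0
  refine lt_of_le_of_lt h3 ?_
  rw [div_mul_eq_mul_div, div_lt_iff₀ (by positivity)]
  nlinarith

theorem isCompact_convexHull_euclidean' {d : ℕ} {K : Set (EuclideanSpace ℝ (Fin d))}
    (hK : IsCompact K) : IsCompact (convexHull ℝ K) := by
  rcases K.eq_empty_or_nonempty with rfl | ⟨y₀, hy₀⟩
  · simp
  set n := d + 1 with hn
  set S : Set ((Fin n → ℝ) × (Fin n → EuclideanSpace ℝ (Fin d))) :=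
    (stdSimplex ℝ (Fin n)) ×ˢ (Set.pi Set.univ fun _ => K) with hS
  have hScomp : IsCompact S :=
    (isCompact_stdSimplex (𝕜 := ℝ) (ι := Fin n)).prod (isCompact_univ_pi fun _ => hK)
  set g : (Fin n → ℝ) × (Fin n → EuclideanSpace ℝ (Fin d)) → EuclideanSpace ℝ (Fin d) :=
    fun q => ∑ i : Fin n, q.1 i • q.2 i with hg
  have hgcont : Continuous g := by
    apply continuous_finset_sum
    intro i _
    exact ((continuous_apply i).comp continuous_fst).smul
      ((continuous_apply i).comp continuous_snd)
  have himage : g '' S = convexHull ℝ K := by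
    apply Set.Subset.antisymm
    · rintro _ ⟨⟨w, p⟩, ⟨⟨hw0, hw1⟩, hp⟩, rfl⟩
      exact (convex_convexHull ℝ K).sum_mem (fun i _ => hw0 i) hw1
        (fun i _ => subset_convexHull ℝ K (hp i (Set.mem_univ i)))
    · intro x hx
      rw [convexHull_eq_union] at hx
      simp only [Set.mem_iUnion] at hx
      obtain ⟨t, hts, hai, hxt⟩ := hx
      have hcard : #t ≤ n := by
        have h1 := hai.card_le_finrank_succ
        have h2 := Submodule.finrank_le
          (vectorSpan ℝ (Set.range ((↑) : t → EuclideanSpace ℝ (Fin d))))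
        rw [finrank_euclideanSpace, Fintype.card_fin] at h2
        have : Fintype.card t ≤ d + 1 := le_trans h1 (by omega)
        simpa [Fintype.card_coe] using this
      rw [Finset.convexHull_eq] at hxt
      obtain ⟨w, hw0, hw1, hwx⟩ := hxt
      rw [t.centerMass_eq_of_sum_1 _ hw1] at hwx
      let e := t.equivFin
      classical
      set p : Fin n → EuclideanSpace ℝ (Fin d) :=
        fun i => if h : (i : ℕ) < #t then (e.symm ⟨i, h⟩ : EuclideanSpace ℝ (Fin d)) else y₀
        with hp
      set w' : Fin n → ℝ :=
        fun i => if h : (i : ℕ) < #t then w (e.symm ⟨i, h⟩ : EuclideanSpace ℝ (Fin d)) else 0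
        with hw'
      have reindex : ∀ (φ : ℝ → EuclideanSpace ℝ (Fin d) → EuclideanSpace ℝ (Fin d)),
          (∀ y, φ 0 y = 0) →
          ∑ i : Fin n, φ (w' i) (p i) = ∑ y ∈ t, φ (w y) y := by
        intro φ hφ
        have h1 : ∑ i : Fin n, φ (w' i) (p i)
            = ∑ j : Fin #t, φ (w' (Fin.castLE hcard j)) (p (Fin.castLE hcard j)) := by
          have := Finset.sum_map Finset.univ (Fin.castLEEmb hcard) (fun i => φ (w' i) (p i))
          simp only [Fin.castLEEmb_apply] at this
          rw [← this]
          symm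
          apply Finset.sum_subset (Finset.subset_univ _)
          intro i _ hi
          have hni : ¬ (i : ℕ) < #t := by
            intro hlt
            apply hi
            simp only [Finset.mem_map, Finset.mem_univ, true_and, Fin.castLEEmb_apply]
            exact ⟨⟨(i : ℕ), hlt⟩, by simp [Fin.castLE, Fin.ext_iff]⟩
          simp [hw', hni, hφ]
        have h2 : ∀ j : Fin #t, φ (w' (Fin.castLE hcard j)) (p (Fin.castLE hcard j))
            = φ (w (e.symm j)) (e.symm j) := by
          intro j
          have hj : ((Fin.castLE hcard j : Fin n) : ℕ) < #t := by simp [j.isLt]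
          have hjj : (⟨((Fin.castLE hcard j : Fin n) : ℕ), hj⟩ : Fin #t) = j := Fin.ext (by simp)
          simp only [hw', hp, dif_pos hj, hjj]
        rw [h1, Finset.sum_congr rfl (fun j _ => h2 j),
          e.symm.sum_comp (fun y : t => φ (w y) y)]
        exact Finset.sum_coe_sort t (fun y => φ (w y) y)
      have reindexR : ∑ i : Fin n, w' i = ∑ y ∈ t, w y := by
        have h1 : ∑ i : Fin n, w' i = ∑ j : Fin #t, w' (Fin.castLE hcard j) := by
          have := Finset.sum_map Finset.univ (Fin.castLEEmb hcard) (fun i => w' i)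
          simp only [Fin.castLEEmb_apply] at this
          rw [← this]
          symm
          apply Finset.sum_subset (Finset.subset_univ _)
          intro i _ hi
          have hni : ¬ (i : ℕ) < #t := by
            intro hlt
            apply hi
            simp only [Finset.mem_map, Finset.mem_univ, true_and, Fin.castLEEmb_apply]
            exact ⟨⟨(i : ℕ), hlt⟩, by simp [Fin.castLE, Fin.ext_iff]⟩
          simp [hw', hni]
        have h2 : ∀ j : Fin #t, w' (Fin.castLE hcard j) = w (e.symm j) := by
          intro j
          have hj : ((Fin.castLE hcard j : Fin n) : ℕ) < #t := by simp [j.isLt]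
          have hjj : (⟨((Fin.castLE hcard j : Fin n) : ℕ), hj⟩ : Fin #t) = j := Fin.ext (by simp)
          simp only [hw', dif_pos hj, hjj]
        rw [h1, Finset.sum_congr rfl (fun j _ => h2 j),
          e.symm.sum_comp (fun y : t => w y)]
        exact Finset.sum_coe_sort t (fun y => w y)
      refine ⟨⟨w', p⟩, ⟨⟨?_, ?_⟩, ?_⟩, ?_⟩
      · intro i
        by_cases h : (i : ℕ) < #t
        · simpa [hw', h] using hw0 _ (Finset.coe_mem _)
        · simp [hw', h]
      · rw [reindexR]; exact hw1
      · intro i _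
        by_cases h : (i : ℕ) < #t
        · simpa [hp, h] using hts (Finset.coe_mem (e.symm ⟨i, h⟩))
        · simpa [hp, h] using hy₀
      · simp only [hg]
        rw [reindex (fun a y => a • y) (fun y => zero_smul ℝ y)]
        simpa using hwx
  rw [← himage]
  exact hScomp.image hgcont

theorem stmt14 (d J : ℕ)
    (Φ : Fin J → (EuclideanSpace ℝ (Fin d) →ᵃ[ℝ] EuclideanSpace ℝ (Fin d)))
    (r : Fin J → NNReal) (hr : ∀ j, r j < 1)
    (hlip : ∀ j, LipschitzWith (r j) (Φ j))
    (F : Set (EuclideanSpace ℝ (Fin d)))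
    (hFne : F.Nonempty) (hFc : IsCompact F)
    (hFinv : F = ⋃ j, (Φ j) '' F)
    (hbij : ∀ j, Function.Bijective (Φ j))
    (C : ℕ → Set (EuclideanSpace ℝ (Fin d)))
    (hC0 : C 0 = convexHull ℝ F)
    (hCsucc : ∀ k, C (k + 1) = ⋃ j, (Φ j) '' C k)
    (hnt : (interior (convexHull ℝ F)).Nonempty)
    (hts : ∀ j ℓ, j ≠ ℓ → interior ((Φ j) '' convexHull ℝ F) ∩ interior ((Φ ℓ) '' convexHull ℝ F) = ∅) :
    ∀ k, (⋃ j, (Φ j) '' closure (C k \ C (k + 1))) =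
      closure (C (k + 1) \ C (k + 2)) := by
  rw [← hC0] at hnt hts
  choose h hh using fun j => affine_homeo' (Φ j) (hbij j)
  have hC0conv : Convex ℝ (C 0) := hC0 ▸ convex_convexHull ℝ F
  have hC0c : IsCompact (C 0) := hC0 ▸ isCompact_convexHull_euclidean' hFc
  have hCc : ∀ k, IsCompact (C k) := by
    intro k
    induction k with
    | zero => exact hC0c
    | succ k ih =>
      rw [hCsucc]
      exact isCompact_iUnion fun j => ih.image (hlip j).continuous
  have hsub0 : ∀ j, Φ j '' C 0 ⊆ C 0 := by
    intro j
    have hΦF : Φ j '' F ⊆ F := by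
      have : Φ j '' F ⊆ ⋃ i, Φ i '' F := Set.subset_iUnion (fun i => Φ i '' F) j
      rwa [← hFinv] at this
    rw [hC0, AffineMap.image_convexHull]
    exact convexHull_mono hΦF
  have hmono : ∀ k, C (k + 1) ⊆ C k := by
    intro k
    induction k with
    | zero =>
      rw [hCsucc 0]
      exact Set.iUnion_subset hsub0
    | succ k ih =>
      rw [hCsucc (k + 1)]
      exact Set.iUnion_subset fun j => (Set.image_mono ih).trans
        (by rw [hCsucc k]; exact Set.subset_iUnion (fun i => Φ i '' C k) j)
  have hsubC0 : ∀ k, C k ⊆ C 0 := by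
    intro k
    induction k with
    | zero => exact subset_rfl
    | succ k ih => exact (hmono k).trans ih
  have him : ∀ j (s : Set (EuclideanSpace ℝ (Fin d))),
      interior (Φ j '' s) = Φ j '' interior s := by
    intro j s
    rw [← hh j, ← Homeomorph.image_interior]
  have hstruct : ∀ k, ∀ x ∈ C k, ∃ D, x ∈ D ∧ D ⊆ C k ∧ Convex ℝ D ∧ IsCompact D ∧
      (interior D).Nonempty := by
    intro k
    induction k with
    | zero => exact fun x hx => ⟨C 0, hx, subset_rfl, hC0conv, hC0c, hnt⟩
    | succ k ih =>
      intro x hx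
      rw [hCsucc] at hx
      obtain ⟨j, hj⟩ := Set.mem_iUnion.mp hx
      obtain ⟨y, hy, rfl⟩ := hj
      obtain ⟨D, hyD, hDC, hDconv, hDcomp, hDint⟩ := ih y hy
      refine ⟨Φ j '' D, Set.mem_image_of_mem _ hyD, ?_, hDconv.affine_image _,
        hDcomp.image (hlip j).continuous, ?_⟩
      · rw [hCsucc]
        exact Set.subset_iUnion_of_subset j (Set.image_mono hDC)
      · rw [him j D]
        exact hDint.image _
  -- frontiers have measure zero
  have hNnull : MeasureTheory.volume (⋃ m, frontier (Φ m '' C 0)) = 0 :=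
    MeasureTheory.measure_iUnion_null fun m =>
      (hC0conv.affine_image (Φ m)).addHaar_frontier MeasureTheory.volume
  intro k
  apply Set.Subset.antisymm
  · -- hard direction
    refine Set.iUnion_subset fun j => ?_
    have h1 : Φ j '' closure (C k \ C (k + 1)) ⊆ closure (Φ j '' (C k \ C (k + 1))) :=
      image_closure_subset_closure_image (hlip j).continuous
    have hcore : Φ j '' (C k \ C (k + 1)) ⊆ closure (C (k + 1) \ C (k + 2)) := by
      rintro _ ⟨y, ⟨hyk, hyk1⟩, rfl⟩
      have hxnot : Φ j y ∉ Φ j '' C (k + 1) := by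
        rintro ⟨u, hu, he⟩
        exact hyk1 ((hbij j).1 he ▸ hu)
      obtain ⟨D, hyD, hDC, hDconv, hDcomp, hDint⟩ := hstruct k y hyk
      have hjD : Φ j '' D ⊆ C (k + 1) := by
        rw [hCsucc]
        exact Set.subset_iUnion_of_subset j (Set.image_mono hDC)
      have hjDconv : Convex ℝ (Φ j '' D) := hDconv.affine_image _
      have hjDint : (interior (Φ j '' D)).Nonempty := by
        rw [him j D]; exact hDint.image _
      have hxcl : Φ j y ∈ closure (interior (Φ j '' D)) :=
        mem_closure_interior_of_convex' hjDconv hjDint (Set.mem_image_of_mem _ hyD)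
      rw [Metric.mem_closure_iff]
      intro ε hε
      have hVopen : IsOpen (Metric.ball (Φ j y) ε ∩ (Φ j '' C (k + 1))ᶜ) :=
        Metric.isOpen_ball.inter ((hCc (k + 1)).image (hlip j).continuous).isClosed.isOpen_compl
      have hxV : Φ j y ∈ Metric.ball (Φ j y) ε ∩ (Φ j '' C (k + 1))ᶜ :=
        ⟨Metric.mem_ball_self hε, hxnot⟩
      have hWne : ((Metric.ball (Φ j y) ε ∩ (Φ j '' C (k + 1))ᶜ) ∩
          interior (Φ j '' D)).Nonempty :=
        _root_.mem_closure_iff.mp hxcl _ hVopen hxV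
      set W := (Metric.ball (Φ j y) ε ∩ (Φ j '' C (k + 1))ᶜ) ∩ interior (Φ j '' D) with hW
      have hWopen : IsOpen W := hVopen.inter isOpen_interior
      have hWpos : 0 < MeasureTheory.volume W := hWopen.measure_pos MeasureTheory.volume hWne
      have hzex : ∃ z ∈ W, z ∉ ⋃ m, frontier (Φ m '' C 0) := by
        by_contra hcon
        push_neg at hcon
        have : W ⊆ ⋃ m, frontier (Φ m '' C 0) := hcon
        have := MeasureTheory.measure_mono (μ := MeasureTheory.volume) this
        rw [hNnull] at this
        exact absurd (le_antisymm this zero_le) (ne_of_gt hWpos)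
      obtain ⟨z, ⟨⟨hzball, hznotj⟩, hzint⟩, hzN⟩ := hzex
      refine ⟨z, ⟨hjD (interior_subset hzint), ?_⟩, by rwa [dist_comm, ← Metric.mem_ball]⟩
      intro hz
      rw [hCsucc] at hz
      obtain ⟨m, hm⟩ := Set.mem_iUnion.mp hz
      by_cases hmj : m = j
      · exact hznotj (hmj ▸ hm)
      · have hzm : z ∈ Φ m '' C 0 := Set.image_mono (hsubC0 (k + 1)) hm
        have hzj : z ∈ interior (Φ j '' C 0) :=
          interior_mono (Set.image_mono (hDC.trans (hsubC0 k))) hzint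
        have hznotint : z ∉ interior (Φ m '' C 0) := by
          intro hint
          have := hts j m (fun hjm => hmj hjm.symm)
          exact absurd (Set.mem_inter hzj hint) (by rw [this]; exact Set.notMem_empty z)
        exact hzN (Set.mem_iUnion.mpr ⟨m, subset_closure hzm, hznotint⟩)
    exact h1.trans ((closure_mono hcore).trans (by rw [closure_closure]))
  · -- easy direction
    have hclosed : IsClosed (⋃ j, Φ j '' closure (C k \ C (k + 1))) := by
      apply isClosed_iUnion_of_finite
      intro j
      have hcomp : IsCompact (closure (C k \ C (k + 1))) :=
        IsCompact.of_isClosed_subset (hCc k) isClosed_closure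
          (closure_minimal Set.diff_subset (hCc k).isClosed)
      exact (hcomp.image (hlip j).continuous).isClosed
    apply closure_minimal _ hclosed
    rintro x ⟨hx1, hx2⟩
    rw [hCsucc] at hx1
    obtain ⟨j, hj⟩ := Set.mem_iUnion.mp hx1
    obtain ⟨y, hy, rfl⟩ := hj
    have hy1 : y ∉ C (k + 1) := by
      intro hc
      exact hx2 (by rw [hCsucc]; exact Set.mem_iUnion.mpr ⟨j, Set.mem_image_of_mem _ hc⟩)
    exact Set.mem_iUnion.mpr ⟨j, Set.mem_image_of_mem _ (subset_closure ⟨hy, hy1⟩)⟩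
end

section
/- The collection T = {Φ_w(G_q) : w a finite word over {1,…,J}, q = 1,…,Q} is an open tiling of C \ F: the tiles are pairwise disjoint open sets, none of them intersects F, and C = closure(⋃ Φ_w(G_q)). -/
open Set Filter MeasureTheory

lemma aux_mem_closure_interior {E : Type*} [NormedAddCommGroup E] [NormedSpace ℝ E]
    {s : Set E} (hs : Convex ℝ s) {y x : E} (hy : y ∈ interior s) (hx : x ∈ s) :
    x ∈ closure (interior s) := by
  have h0 : Tendsto (fun n : ℕ => (1 / ((n : ℝ) + 1) : ℝ)) atTop (nhds 0) :=
    tendsto_one_div_add_atTop_nhds_zero_nat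
  have h : Tendsto (fun n : ℕ => x + (1 / ((n : ℝ) + 1)) • (y - x)) atTop (nhds x) := by
    have := (h0.smul_const (y - x)).const_add x
    simpa using this
  refine mem_closure_of_tendsto h (Eventually.of_forall fun n => ?_)
  refine hs.add_smul_sub_mem_interior hx hy ⟨by positivity, ?_⟩
  rw [div_le_one (by positivity)]
  linarith [Nat.cast_nonneg (α := ℝ) n]

lemma aux_convexHull_isCompact {d : ℕ} {F : Set (EuclideanSpace ℝ (Fin d))}
    (hFne : F.Nonempty) (hFc : IsCompact F) : IsCompact (convexHull ℝ F) := by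
  classical
  obtain ⟨x₀, hx₀⟩ := hFne
  set n := d + 1 with hn
  set f : (Fin n → ℝ) × (Fin n → EuclideanSpace ℝ (Fin d)) → EuclideanSpace ℝ (Fin d) :=
    fun p => ∑ i, p.1 i • p.2 i with hf
  have hfc : Continuous f := by
    apply continuous_finset_sum
    intro i _
    exact ((continuous_apply i).comp continuous_fst).smul
      ((continuous_apply i).comp continuous_snd)
  have hK : IsCompact ((stdSimplex ℝ (Fin n)) ×ˢ (Set.univ.pi fun _ : Fin n => F)) :=
    (isCompact_stdSimplex ℝ (Fin n)).prod (isCompact_univ_pi fun _ => hFc)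
  have himg : convexHull ℝ F = f '' ((stdSimplex ℝ (Fin n)) ×ˢ (Set.univ.pi fun _ : Fin n => F)) := by
    apply Set.Subset.antisymm
    · intro x hx
      rw [convexHull_eq_union] at hx
      simp only [Set.mem_iUnion] at hx
      obtain ⟨t, htF, hta, hxt⟩ := hx
      have htne : t.Nonempty := by
        rcases Finset.eq_empty_or_nonempty t with h | h
        · subst h; simp at hxt
        · exact h
      obtain ⟨a, ha⟩ := htne
      haveI : Nonempty ↥t := ⟨⟨a, ha⟩⟩
      set m := t.card with hm
      have hcard : m ≤ n := by
        have h1 := hta.finrank_vectorSpan_add_one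
        rw [Fintype.card_coe] at h1
        have h2 : Module.finrank ℝ (vectorSpan ℝ (Set.range ((↑) : t → EuclideanSpace ℝ (Fin d)))) ≤ d := by
          have h3 := Submodule.finrank_le (vectorSpan ℝ (Set.range ((↑) : t → EuclideanSpace ℝ (Fin d))))
          rwa [finrank_euclideanSpace_fin] at h3
        omega
      rw [Finset.mem_convexHull'] at hxt
      obtain ⟨w, hw₀, hw₁, hwx⟩ := hxt
      set e : Fin m ≃ ↥t := t.equivFin.symm with he
      have key : ∀ {M : Type} [AddCommMonoid M] [Module ℝ M] (g : EuclideanSpace ℝ (Fin d) → M),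
          (∑ i : Fin n, if h : (i : ℕ) < m then g ((e ⟨(i : ℕ), h⟩ : ↥t) : EuclideanSpace ℝ (Fin d)) else 0)
            = ∑ y ∈ t, g y := by
        intro M _ _ g
        rw [Fin.sum_univ_eq_sum_range (fun k => if h : k < m then g (e ⟨k, h⟩) else 0) n]
        rw [← Finset.sum_subset (Finset.range_subset_range.2 hcard) (by
          intro k _ hk
          rw [dif_neg]
          simpa [Finset.mem_range] using hk)]
        rw [← Fin.sum_univ_eq_sum_range (fun k => if h : k < m then g (e ⟨k, h⟩) else 0) m]
        have : ∀ i : Fin m, (if h : (i : ℕ) < m then g (e ⟨(i : ℕ), h⟩) else 0) = g (e i) := by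
          intro i
          rw [dif_pos i.isLt]
        rw [Finset.sum_congr rfl fun i _ => this i]
        rw [Equiv.sum_comp e (fun y : ↥t => g ↑y)]
        exact Finset.sum_coe_sort t g
      set W : Fin n → ℝ := fun i => if h : (i : ℕ) < m then w ((e ⟨(i : ℕ), h⟩ : ↥t) : EuclideanSpace ℝ (Fin d)) else 0 with hW
      set Z : Fin n → EuclideanSpace ℝ (Fin d) := fun i =>
        if h : (i : ℕ) < m then ((e ⟨(i : ℕ), h⟩ : ↥t) : EuclideanSpace ℝ (Fin d)) else x₀ with hZ
      have hWstd : W ∈ stdSimplex ℝ (Fin n) := by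
        refine ⟨fun i => ?_, ?_⟩
        · simp only [hW]
          split_ifs with h
          · exact hw₀ _ (e ⟨(i : ℕ), h⟩).2
          · exact le_refl 0
        · show (∑ i, W i) = 1
          simp only [hW]
          rw [key w]
          exact hw₁
      have hZpi : Z ∈ Set.univ.pi (fun _ : Fin n => F) := by
        intro i _
        simp only [hZ]
        split_ifs with h
        · exact htF (e ⟨(i : ℕ), h⟩).2
        · exact hx₀
      refine ⟨(W, Z), Set.mk_mem_prod hWstd hZpi, ?_⟩
      · show (∑ i, W i • Z i) = x
        have hterm : ∀ i : Fin n, W i • Z i =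
            (if h : (i : ℕ) < m then (fun y : EuclideanSpace ℝ (Fin d) => w y • y)
              ((e ⟨(i : ℕ), h⟩ : ↥t) : EuclideanSpace ℝ (Fin d)) else 0) := by
          intro i
          simp only [hW, hZ]
          split_ifs with h
          · rfl
          · rw [zero_smul]
        rw [Finset.sum_congr rfl fun i _ => hterm i, key (fun y => w y • y)]
        exact hwx
    · rintro _ ⟨⟨w, z⟩, ⟨hw, hz⟩, rfl⟩
      exact mem_convexHull_of_exists_fintype w z hw.1 hw.2 (fun i => hz i (Set.mem_univ i)) rfl
  rw [himg]
  exact hK.image hfc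
noncomputable def wordMap {d J : ℕ}
    (Φ : Fin J → (EuclideanSpace ℝ (Fin d) →ᵃ[ℝ] EuclideanSpace ℝ (Fin d))) :
    List (Fin J) → (EuclideanSpace ℝ (Fin d) → EuclideanSpace ℝ (Fin d))
  | [] => id
  | j :: w => (Φ j) ∘ wordMap Φ w

theorem stmt16 (d J : ℕ)
    (Φ : Fin J → (EuclideanSpace ℝ (Fin d) →ᵃ[ℝ] EuclideanSpace ℝ (Fin d)))
    (r : Fin J → NNReal) (hr : ∀ j, r j < 1)
    (hlip : ∀ j, LipschitzWith (r j) (Φ j))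
    (F : Set (EuclideanSpace ℝ (Fin d)))
    (hFne : F.Nonempty) (hFc : IsCompact F)
    (hFinv : F = ⋃ j, (Φ j) '' F)
    (hbij : ∀ j, Function.Bijective (Φ j))
    (C : ℕ → Set (EuclideanSpace ℝ (Fin d)))
    (hC0 : C 0 = convexHull ℝ F)
    (hCsucc : ∀ k, C (k + 1) = ⋃ j, (Φ j) '' C k)
    (hnt : (interior (C 0 \ C 1)).Nonempty)
    (hts : ∀ j ℓ, j ≠ ℓ → interior ((Φ j) '' convexHull ℝ F) ∩ interior ((Φ ℓ) '' convexHull ℝ F) = ∅)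
    -- generators: connected components of interior (C 0 \ C 1)
    (Gens : Set (Set (EuclideanSpace ℝ (Fin d))))
    (hGens : Gens = {G | ∃ x ∈ interior (C 0 \ C 1),
      G = connectedComponentIn (interior (C 0 \ C 1)) x}) :
    (∀ w : List (Fin J), ∀ G ∈ Gens, IsOpen (wordMap Φ w '' G)) ∧
    (∀ w w' : List (Fin J), ∀ G ∈ Gens, ∀ G' ∈ Gens, (w, G) ≠ (w', G') →
      Disjoint (wordMap Φ w '' G) (wordMap Φ w' '' G')) ∧
    (∀ w : List (Fin J), ∀ G ∈ Gens, wordMap Φ w '' G ∩ F = ∅) ∧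
    convexHull ℝ F = closure (⋃ w : List (Fin J), ⋃ G ∈ Gens, wordMap Φ w '' G) := by
  classical
  rw [← hC0] at hts
  -- homeomorphisms realizing the word maps
  have hhom : ∀ w : List (Fin J),
      ∃ e : EuclideanSpace ℝ (Fin d) ≃ₜ EuclideanSpace ℝ (Fin d), ⇑e = wordMap Φ w := by
    intro w
    induction w with
    | nil => exact ⟨Homeomorph.refl _, rfl⟩
    | cons j w ih =>
      obtain ⟨e, he⟩ := ih
      refine ⟨e.trans (AffineEquiv.ofBijective (hbij j)).toHomeomorphOfFiniteDimensional, ?_⟩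
      funext x
      simp [wordMap, ← he]
  choose e he using hhom
  have hwcont : ∀ w, Continuous (wordMap Φ w) := fun w => he w ▸ (e w).continuous
  have hwinj : ∀ w, Function.Injective (wordMap Φ w) := fun w => he w ▸ (e w).injective
  have hwopen : ∀ (w) (s : Set (EuclideanSpace ℝ (Fin d))), IsOpen s →
      IsOpen (wordMap Φ w '' s) := fun w s hs => he w ▸ ((e w).isOpenMap s hs)
  have hwint : ∀ (w) (s : Set (EuclideanSpace ℝ (Fin d))),
      wordMap Φ w '' interior s = interior (wordMap Φ w '' s) := fun w s =>
    he w ▸ (e w).image_interior s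
  have hwm_append : ∀ u v : List (Fin J), wordMap Φ (u ++ v) = wordMap Φ u ∘ wordMap Φ v := by
    intro u v
    induction u with
    | nil => rfl
    | cons j u ih => simp [wordMap, ih, Function.comp_assoc]
  have hsingle : ∀ (j : Fin J) (s : Set (EuclideanSpace ℝ (Fin d))),
      wordMap Φ [j] '' s = Φ j '' s := by
    intro j s
    simp [wordMap]
  have hint1 : ∀ (j : Fin J) (s : Set (EuclideanSpace ℝ (Fin d))),
      Φ j '' interior s = interior (Φ j '' s) := by
    intro j s
    rw [← hsingle, ← hsingle, hwint]
  have hjinj : ∀ j : Fin J, Function.Injective (Φ j) := fun j => (hbij j).injective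
  -- basic facts about F and C
  have hFsub : ∀ j, Φ j '' F ⊆ F := by
    intro j
    conv_rhs => rw [hFinv]
    exact subset_iUnion (fun j => Φ j '' F) j
  have hC0conv : Convex ℝ (C 0) := hC0 ▸ convex_convexHull ℝ F
  have hC0cpt : IsCompact (C 0) := hC0 ▸ aux_convexHull_isCompact hFne hFc
  have hFC0 : F ⊆ C 0 := hC0 ▸ subset_convexHull ℝ F
  have hΦC0 : ∀ j, Φ j '' C 0 ⊆ C 0 := by
    intro j
    rw [hC0, AffineMap.image_convexHull]
    exact convexHull_mono (hFsub j)
  have hwsub0 : ∀ w, wordMap Φ w '' C 0 ⊆ C 0 := by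
    intro w
    induction w with
    | nil => simp [wordMap]
    | cons j w ih =>
      have : wordMap Φ (j :: w) '' C 0 = Φ j '' (wordMap Φ w '' C 0) := by
        rw [← Set.image_comp]; rfl
      rw [this]
      exact (Set.image_mono ih).trans (hΦC0 j)
  have hCmem : ∀ (k : ℕ) (x), x ∈ C k ↔
      ∃ w : List (Fin J), w.length = k ∧ x ∈ wordMap Φ w '' C 0 := by
    intro k
    induction k with
    | zero =>
      intro x
      constructor
      · intro hx; exact ⟨[], rfl, by simpa [wordMap] using hx⟩
      · rintro ⟨w, hw, hx⟩
        rw [List.length_eq_zero_iff] at hw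
        subst hw
        simpa [wordMap] using hx
    | succ k ih =>
      intro x
      rw [hCsucc k]
      simp only [Set.mem_iUnion]
      constructor
      · rintro ⟨j, y, hy, rfl⟩
        obtain ⟨w, hwlen, z, hz, rfl⟩ := (ih y).1 hy
        exact ⟨j :: w, by simp [hwlen], ⟨z, hz, rfl⟩⟩
      · rintro ⟨w, hwlen, z, hz, rfl⟩
        cases w with
        | nil => simp at hwlen
        | cons j w' =>
          exact ⟨j, wordMap Φ w' z, (ih _).2 ⟨w', by simpa using hwlen, ⟨z, hz, rfl⟩⟩, rfl⟩
  have hwordC : ∀ w : List (Fin J), wordMap Φ w '' C 0 ⊆ C w.length :=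
    fun w x hx => (hCmem _ x).2 ⟨w, rfl, hx⟩
  have hCanti : ∀ k, C (k + 1) ⊆ C k := by
    intro k
    induction k with
    | zero =>
      rw [hCsucc 0]
      exact iUnion_subset fun j => hΦC0 j
    | succ k ih =>
      rw [hCsucc (k + 1)]
      refine iUnion_subset fun j => le_trans (Set.image_mono ih) ?_
      rw [hCsucc k]
      exact subset_iUnion (fun j => Φ j '' C k) j
  have hCle : ∀ {k m : ℕ}, k ≤ m → C m ⊆ C k := by
    intro k m h
    induction h with
    | refl => exact subset_rfl
    | step h ih => exact (hCanti _).trans ih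
  have hCcpt : ∀ k, IsCompact (C k) := by
    intro k
    induction k with
    | zero => exact hC0cpt
    | succ k ih =>
      rw [hCsucc k]
      exact isCompact_iUnion fun j => ih.image (Φ j).continuous_of_finiteDimensional
  have hCclosed : ∀ k, IsClosed (C k) := fun k => (hCcpt k).isClosed
  -- the open set O and its components
  set O := interior (C 0 \ C 1) with hOdef
  have hOopen : IsOpen O := isOpen_interior
  have hOeq : O = interior (C 0) \ C 1 := by
    rw [hOdef, Set.diff_eq, interior_inter, interior_compl, (hCclosed 1).closure_eq,
      ← Set.diff_eq]
  have hintC0ne : (interior (C 0)).Nonempty := hnt.mono (interior_mono Set.diff_subset)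
  have hGopen : ∀ G ∈ Gens, IsOpen G := by
    rintro G hG
    rw [hGens] at hG
    obtain ⟨x, hx, rfl⟩ := hG
    exact hOopen.connectedComponentIn
  have hGsubO : ∀ G ∈ Gens, G ⊆ O := by
    rintro G hG
    rw [hGens] at hG
    obtain ⟨x, hx, rfl⟩ := hG
    exact connectedComponentIn_subset _ _
  -- convexity of pieces
  have hKconv : ∀ w, Convex ℝ (wordMap Φ w '' C 0) := by
    intro w
    induction w with
    | nil => simpa [wordMap] using hC0conv
    | cons j w ih =>
      have : wordMap Φ (j :: w) '' C 0 = Φ j '' (wordMap Φ w '' C 0) := by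
        rw [← Set.image_comp]; rfl
      rw [this]
      exact ih.affine_image (Φ j)
  have hKint_ne : ∀ w, (interior (wordMap Φ w '' C 0)).Nonempty := by
    intro w
    rw [← hwint]
    exact hintC0ne.image _
  have hKci : ∀ w, wordMap Φ w '' C 0 ⊆ closure (interior (wordMap Φ w '' C 0)) :=
    fun w x hx => aux_mem_closure_interior (hKconv w) (hKint_ne w).some_mem hx
  -- disjointness of interiors for distinct words of the same length
  have hdisj : ∀ w w' : List (Fin J), w.length = w'.length → w ≠ w' →
      interior (wordMap Φ w '' C 0) ∩ interior (wordMap Φ w' '' C 0) = ∅ := by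
    intro w
    induction w with
    | nil =>
      intro w' hlen hne
      cases w' with
      | nil => exact absurd rfl hne
      | cons j w' => simp at hlen
    | cons j u ih =>
      intro w' hlen hne
      cases w' with
      | nil => simp at hlen
      | cons j' u' =>
        have himgc : ∀ (i : Fin J) (v : List (Fin J)),
            wordMap Φ (i :: v) '' C 0 = Φ i '' (wordMap Φ v '' C 0) := by
          intro i v
          rw [← Set.image_comp]; rfl
        by_cases hj : j = j'
        · subst hj
          have hu : u ≠ u' := by rintro rfl; exact hne rfl
          have hlen' : u.length = u'.length := by simpa using hlen
          rw [himgc, himgc, ← hint1, ← hint1, ← Set.image_inter (hjinj j),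
            ih u' hlen' hu, Set.image_empty]
        · apply Set.eq_empty_of_subset_empty
          intro x hx
          rw [← hts j j' hj]
          constructor
          · refine interior_mono ?_ hx.1
            rw [himgc]
            exact Set.image_mono (hwsub0 u)
          · refine interior_mono ?_ hx.2
            rw [himgc]
            exact Set.image_mono (hwsub0 u')
  -- an open set inside interior (K w) misses K u for u ≠ w of the same length
  have hmiss : ∀ w u : List (Fin J), w.length = u.length → w ≠ u →
      ∀ s : Set (EuclideanSpace ℝ (Fin d)), IsOpen s → s ⊆ interior (wordMap Φ w '' C 0) →
      s ∩ (wordMap Φ u '' C 0) = ∅ := by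
    intro w u hlen hne s hs hsub
    by_contra h
    obtain ⟨x, hxs, hxu⟩ := Set.nonempty_iff_ne_empty.2 h
    have hxcl : x ∈ closure (interior (wordMap Φ u '' C 0)) := hKci u hxu
    obtain ⟨y, hys, hyint⟩ := (_root_.mem_closure_iff.1 hxcl) s hs hxs
    have : y ∈ (∅ : Set (EuclideanSpace ℝ (Fin d))) := by
      rw [← hdisj w u hlen hne]
      exact ⟨hsub hys, hyint⟩
    exact this
  -- tiles
  have htile_subint : ∀ (w) (G), G ∈ Gens → wordMap Φ w '' G ⊆ interior (wordMap Φ w '' C 0) := by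
    intro w G hG
    have h1 : G ⊆ interior (C 0) := (hGsubO G hG).trans (hOeq ▸ Set.diff_subset)
    exact (Set.image_mono h1).trans (le_of_eq (hwint w (C 0)))
  have htile_open : ∀ (w) (G), G ∈ Gens → IsOpen (wordMap Φ w '' G) :=
    fun w G hG => hwopen w G (hGopen G hG)
  have hGC1 : ∀ G ∈ Gens, G ∩ C 1 = ∅ := by
    intro G hG
    apply Set.eq_empty_of_subset_empty
    rintro x ⟨hxG, hxC1⟩
    have := hGsubO G hG hxG
    rw [hOeq] at this
    exact this.2 hxC1
  have hwC1sub : ∀ w : List (Fin J), wordMap Φ w '' C 1 ⊆ C (w.length + 1) := by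
    rintro w x ⟨y, hy, rfl⟩
    obtain ⟨v, hv1, z, hz, rfl⟩ := (hCmem 1 y).1 hy
    refine (hCmem _ _).2 ⟨w ++ v, by simp [hv1], ⟨z, hz, ?_⟩⟩
    rw [hwm_append]
    rfl
  -- the key lemma: a tile at level |w| misses C (|w|+1)
  have htile_next : ∀ (w : List (Fin J)) (G), G ∈ Gens →
      wordMap Φ w '' G ∩ C (w.length + 1) = ∅ := by
    intro w G hG
    apply Set.eq_empty_of_subset_empty
    rintro x ⟨hxT, hxC⟩
    obtain ⟨v, hvlen, hxv⟩ := (hCmem _ x).1 hxC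
    set u := v.take w.length with hu
    set s := v.drop w.length with hs
    have hv' : v = u ++ s := (List.take_append_drop _ _).symm
    have hu_len : u.length = w.length := by
      rw [hu, List.length_take]
      omega
    have hs_len : s.length = 1 := by
      rw [hs, List.length_drop]
      omega
    have hKv : wordMap Φ v '' C 0 = wordMap Φ u '' (wordMap Φ s '' C 0) := by
      rw [hv', hwm_append, Set.image_comp]
    have hsC1 : wordMap Φ s '' C 0 ⊆ C 1 := hs_len ▸ hwordC s
    by_cases huw : u = w
    · -- x lies in Φ_w (C 1), contradicting that G misses C 1
      rw [← huw] at hxT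
      rw [hKv] at hxv
      have hx1 : x ∈ wordMap Φ u '' C 1 := Set.image_mono hsC1 hxv
      obtain ⟨a, haG, hax⟩ := hxT
      obtain ⟨b, hb1, hbx⟩ := hx1
      have : a = b := hwinj u (by rw [hax, hbx])
      subst this
      have : a ∈ G ∩ C 1 := ⟨haG, hb1⟩
      rw [hGC1 G hG] at this
      exact this
    · have hxu : x ∈ wordMap Φ u '' C 0 := by
        rw [hKv] at hxv
        exact Set.image_mono ((hsC1.trans (hCanti 0))) hxv
      have := hmiss w u (hu_len.symm) (fun h => huw h.symm) _ (htile_open w G hG)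
        (htile_subint w G hG)
      rw [Set.eq_empty_iff_forall_notMem] at this
      exact this x ⟨hxT, hxu⟩
  have hFCk : ∀ k, F ⊆ C k := by
    intro k
    induction k with
    | zero => exact hFC0
    | succ k ih =>
      rw [hCsucc k]
      intro x hx
      rw [hFinv] at hx
      obtain ⟨j, y, hy, rfl⟩ := Set.mem_iUnion.1 hx
      exact Set.mem_iUnion.2 ⟨j, Set.mem_image_of_mem _ (ih hy)⟩
  refine ⟨fun w G hG => htile_open w G hG, ?_, ?_, ?_⟩
  · -- pairwise disjointness
    have key : ∀ a b : List (Fin J), ∀ A, A ∈ Gens → ∀ B, B ∈ Gens → a.length < b.length →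
        Disjoint (wordMap Φ a '' A) (wordMap Φ b '' B) := by
      intro a b A hA B hB hab
      rw [Set.disjoint_left]
      intro x hxA hxB
      have hBC0 : B ⊆ C 0 := (hGsubO B hB).trans (interior_subset.trans Set.diff_subset)
      have hxC : x ∈ C (a.length + 1) :=
        hCle (Nat.succ_le_of_lt hab) (hwordC b (Set.image_mono hBC0 hxB))
      have h9 := htile_next a A hA
      rw [Set.eq_empty_iff_forall_notMem] at h9
      exact h9 x ⟨hxA, hxC⟩
    intro w w' G hG G' hG' hne
    rcases lt_trichotomy w.length w'.length with h | h | h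
    · exact key w w' G hG G' hG' h
    · by_cases hww : w = w'
      · subst hww
        have hGG : G ≠ G' := fun hEq => hne (by rw [hEq])
        rw [hGens] at hG hG'
        obtain ⟨x, hx, rfl⟩ := hG
        obtain ⟨x', hx', rfl⟩ := hG'
        rw [Set.disjoint_left]
        intro z hz hz'
        obtain ⟨a, ha, haz⟩ := hz
        obtain ⟨b, hb, hbz⟩ := hz'
        have hab : a = b := hwinj w (by rw [haz, hbz])
        subst hab
        have h1 := connectedComponentIn_eq ha
        have h2 := connectedComponentIn_eq hb
        exact hGG (h1.trans h2.symm)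
      · rw [Set.disjoint_left]
        intro x hx hx'
        have h9 := hdisj w w' h hww
        rw [Set.eq_empty_iff_forall_notMem] at h9
        exact h9 x ⟨htile_subint w G hG hx, htile_subint w' G' hG' hx'⟩
    · exact (key w' w G' hG' G hG h).symm
  · -- tiles miss F
    intro w G hG
    apply Set.eq_empty_of_subset_empty
    rintro x ⟨hxT, hxF⟩
    have : x ∈ wordMap Φ w '' G ∩ C (w.length + 1) := ⟨hxT, hFCk _ hxF⟩
    rw [htile_next w G hG] at this
    exact this
  · -- closure statement
    rw [← hC0]
    have hOC0 : O ⊆ C 0 := by rw [hOeq]; exact Set.diff_subset.trans interior_subset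
    have hUsub : (⋃ w : List (Fin J), ⋃ G ∈ Gens, wordMap Φ w '' G) ⊆ C 0 := by
      refine iUnion_subset fun w => iUnion_subset fun G => iUnion_subset fun hG => ?_
      exact (Set.image_mono ((hGsubO G hG).trans hOC0)).trans (hwsub0 w)
    set U := ⋃ w : List (Fin J), ⋃ G ∈ Gens, wordMap Φ w '' G with hU
    have haff_img : ∀ (g : EuclideanSpace ℝ (Fin d) →ᵃ[ℝ] EuclideanSpace ℝ (Fin d))
        (s : Set (EuclideanSpace ℝ (Fin d))),
        volume (g '' s) = ENNReal.ofReal |LinearMap.det g.linear| * volume s := by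
      intro g s
      have hdecomp : ∀ x, g x = g.linear x + g 0 := by
        intro x
        conv_lhs => rw [AffineMap.decomp g]
        rfl
      have h1 : g '' s = (fun y => y + g 0) '' (g.linear '' s) := by
        rw [Set.image_image]
        exact Set.image_congr fun x _ => hdecomp x
      rw [h1]
      simp only [Set.image_add_right, measure_preimage_add_right]
      exact Measure.addHaar_image_linearMap volume g.linear s
    set θ : ENNReal := ∑ j : Fin J, ENNReal.ofReal |LinearMap.det (Φ j).linear| with hθ
    have hC0ne : volume (C 0) ≠ 0 := by
      have h1 : 0 < volume (interior (C 0)) := isOpen_interior.measure_pos volume hintC0ne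
      exact ((h1.trans_le (measure_mono interior_subset)).ne')
    have hC0fin : volume (C 0) ≠ ⊤ := (hCcpt 0).measure_lt_top.ne
    have hpair : Pairwise (Function.onFun (AEDisjoint volume) fun j => Φ j '' C 0) := by
      intro j l hjl
      have hsub : (Φ j '' C 0) ∩ (Φ l '' C 0) ⊆
          frontier (Φ j '' C 0) ∪ frontier (Φ l '' C 0) := by
        rintro x ⟨hxj, hxl⟩
        by_cases hxint : x ∈ interior (Φ j '' C 0)
        · right
          refine ⟨subset_closure hxl, fun hc => ?_⟩
          have h9 := hts j l hjl
          rw [Set.eq_empty_iff_forall_notMem] at h9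
          exact h9 x ⟨hxint, hc⟩
        · left
          exact ⟨subset_closure hxj, hxint⟩
      exact measure_mono_null hsub (measure_union_null
        ((hC0conv.affine_image (Φ j)).addHaar_frontier volume)
        ((hC0conv.affine_image (Φ l)).addHaar_frontier volume))
    have hC1vol : volume (C 1) = θ * volume (C 0) := by
      rw [hCsucc 0, measure_iUnion₀ hpair
        (fun j => (hC0conv.affine_image (Φ j)).nullMeasurableSet _), tsum_fintype, hθ,
        Finset.sum_mul]
      exact Finset.sum_congr rfl fun j _ => haff_img (Φ j) (C 0)
    have hθlt : θ < 1 := by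
      have hdisjC1O : Disjoint (C 1) O := by
        rw [Set.disjoint_left]
        intro a ha haO
        rw [hOeq] at haO
        exact haO.2 ha
      have h2 : volume (C 1) + volume O ≤ volume (C 0) := by
        rw [← measure_union hdisjC1O hOopen.measurableSet]
        exact measure_mono (Set.union_subset (hCanti 0) hOC0)
      have h3 : volume (C 1) < volume (C 0) := by
        have hOpos : 0 < volume O := hOopen.measure_pos volume hnt
        have hC1fin : volume (C 1) ≠ ⊤ :=
          ((measure_mono (hCanti 0)).trans_lt (hCcpt 0).measure_lt_top).ne
        calc volume (C 1) < volume (C 1) + volume O := ENNReal.lt_add_right hC1fin hOpos.ne'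
          _ ≤ volume (C 0) := h2
      rw [hC1vol] at h3
      have h4 : θ * volume (C 0) < 1 * volume (C 0) := by rwa [one_mul]
      exact (ENNReal.mul_left_strictMono hC0ne hC0fin).lt_iff_lt.1 h4
    have hCk_le : ∀ k, volume (C k) ≤ θ ^ k * volume (C 0) := by
      intro k
      induction k with
      | zero => simp
      | succ k ih =>
        rw [hCsucc k]
        calc volume (⋃ j, Φ j '' C k) ≤ ∑ j, volume (Φ j '' C k) :=
              measure_iUnion_fintype_le _ _
          _ = ∑ j, ENNReal.ofReal |LinearMap.det (Φ j).linear| * volume (C k) :=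
              Finset.sum_congr rfl fun j _ => haff_img (Φ j) (C k)
          _ = θ * volume (C k) := by rw [hθ, Finset.sum_mul]
          _ ≤ θ * (θ ^ k * volume (C 0)) := mul_le_mul_right ih θ
          _ = θ ^ (k + 1) * volume (C 0) := by ring
    have hdense : interior (C 0) ⊆ closure U := by
      intro x hx
      by_contra hxcl
      set B := interior (C 0) ∩ (closure U)ᶜ with hB
      have hBopen : IsOpen B := isOpen_interior.inter isClosed_closure.isOpen_compl
      have hBne : B.Nonempty := ⟨x, hx, hxcl⟩
      have hBU : ∀ y ∈ B, y ∉ U := fun y hy hyU => hy.2 (subset_closure hyU)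
      have hBC : ∀ k, B ⊆ C k := by
        intro k
        induction k with
        | zero => exact fun y hy => interior_subset hy.1
        | succ k ih =>
          intro y hyB
          by_contra hyC
          set W := B ∩ (C (k + 1))ᶜ with hW
          have hWopen : IsOpen W := hBopen.inter (hCclosed (k + 1)).isOpen_compl
          have hyW : y ∈ W := ⟨hyB, hyC⟩
          obtain ⟨v, hvlen, hyKv⟩ := (hCmem k y).1 (ih hyB)
          have hycl : y ∈ closure (interior (wordMap Φ v '' C 0)) := hKci v hyKv
          obtain ⟨z, hzW, hzint⟩ := (_root_.mem_closure_iff.1 hycl) W hWopen hyW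
          set z' := (e v).symm z with hz'
          have hzz : wordMap Φ v z' = z := by
            rw [← he v]; exact (e v).apply_symm_apply z
          have hz'int : z' ∈ interior (C 0) := by
            have h5 : z ∈ wordMap Φ v '' interior (C 0) := by rw [hwint]; exact hzint
            obtain ⟨a, ha, haz⟩ := h5
            have haz' : a = z' := hwinj v (by rw [haz, hzz])
            rwa [← haz']
          have hz'C1 : z' ∉ C 1 := by
            intro hc
            have h6 : z ∈ C (k + 1) := by
              have h7 : z ∈ wordMap Φ v '' C 1 := ⟨z', hc, hzz⟩
              have h8 := hwC1sub v h7
              rwa [hvlen] at h8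
            exact hzW.2 h6
          have hz'O : z' ∈ O := by rw [hOeq]; exact ⟨hz'int, hz'C1⟩
          have hGmem : connectedComponentIn O z' ∈ Gens := by
            rw [hGens]; exact ⟨z', hz'O, rfl⟩
          have hzU : z ∈ U := by
            rw [hU]
            exact Set.mem_iUnion.2 ⟨v, Set.mem_iUnion.2 ⟨_, Set.mem_iUnion.2
              ⟨hGmem, ⟨z', mem_connectedComponentIn hz'O, hzz⟩⟩⟩⟩
          exact hBU z hzW.1 hzU
      have hBpos : 0 < volume B := hBopen.measure_pos volume hBne
      have hlim : Tendsto (fun k : ℕ => θ ^ k * volume (C 0)) atTop (nhds 0) := by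
        have h7 := ENNReal.tendsto_pow_atTop_nhds_zero_of_lt_one hθlt
        have h8 := ENNReal.Tendsto.mul_const h7 (Or.inr hC0fin)
        simpa using h8
      obtain ⟨k, hk⟩ := (hlim.eventually_lt_const hBpos).exists
      exact absurd ((measure_mono (hBC k)).trans (hCk_le k)) (not_le.2 hk)
    apply Set.Subset.antisymm
    · calc C 0 ⊆ closure (interior (C 0)) :=
            fun x hx => aux_mem_closure_interior hC0conv hintC0ne.some_mem hx
        _ ⊆ closure (closure U) := closure_mono hdense
        _ = closure U := closure_closure
    · exact closure_minimal hUsub (hCclosed 0)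
end

section
/- No tile intersects the attractor: for every word w and generator G_q, Φ_w(G_q) ∩ F = ∅. -/
open Set

theorem stmt18 (d J : ℕ)
    (Φ : Fin J → (EuclideanSpace ℝ (Fin d) →ᵃ[ℝ] EuclideanSpace ℝ (Fin d)))
    (r : Fin J → NNReal) (hr : ∀ j, r j < 1)
    (hlip : ∀ j, LipschitzWith (r j) (Φ j))
    (F : Set (EuclideanSpace ℝ (Fin d)))
    (hFne : F.Nonempty) (hFc : IsCompact F)
    (hFinv : F = ⋃ j, (Φ j) '' F)
    (hbij : ∀ j, Function.Bijective (Φ j))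
    (C : ℕ → Set (EuclideanSpace ℝ (Fin d)))
    (hC0 : C 0 = convexHull ℝ F)
    (hCsucc : ∀ k, C (k + 1) = ⋃ j, (Φ j) '' C k)
    (hts : ∀ j ℓ, j ≠ ℓ → interior ((Φ j) '' convexHull ℝ F) ∩ interior ((Φ ℓ) '' convexHull ℝ F) = ∅) :
    ∀ G : Set (EuclideanSpace ℝ (Fin d)), G ⊆ interior (C 0 \ C 1) →
      ∀ w : List (Fin J), wordMap Φ w '' G ∩ F = ∅ := by
  intro G hG
  -- basic facts
  have hFC0 : F ⊆ C 0 := hC0 ▸ subset_convexHull ℝ F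
  have hPhiF : ∀ j, Φ j '' F ⊆ F := by
    intro j
    rw [hFinv]
    exact subset_iUnion_of_subset j (by rw [← hFinv])
  have hC1sub : C 1 ⊆ C 0 := by
    rw [hCsucc 0, hC0]
    refine iUnion_subset fun j => ?_
    rw [AffineMap.image_convexHull]
    exact convexHull_mono (hPhiF j)
  have hFC1 : F ⊆ C 1 := by
    rw [hCsucc 0]
    nth_rewrite 1 [hFinv]
    exact iUnion_mono fun j => image_mono hFC0
  -- each Φ j is an open map
  have hopen : ∀ j, IsOpenMap (Φ j) := by
    intro j
    exact Homeomorph.isOpenMap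
      { toEquiv := Equiv.ofBijective _ (hbij j)
        continuous_toFun := (Φ j).continuous_of_finiteDimensional
        continuous_invFun :=
          (AffineEquiv.ofBijective (hbij j)).symm.toAffineMap.continuous_of_finiteDimensional }
  -- trivial case: interior of C 0 empty
  by_cases hne : (interior (C 0)).Nonempty
  swap
  · have hGempty : G = ∅ := by
      have : G ⊆ interior (C 0) :=
        hG.trans (interior_mono diff_subset)
      rw [not_nonempty_iff_eq_empty] at hne
      exact eq_empty_of_subset_empty (hne ▸ this)
    subst hGempty
    simp
  -- key: wordMap images of G stay in interior (C 0)
  have hsub : ∀ w : List (Fin J), wordMap Φ w '' G ⊆ interior (C 0) := by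
    intro w
    induction w with
    | nil => simpa [wordMap] using hG.trans (interior_mono diff_subset)
    | cons j w ih =>
      rw [show wordMap Φ (j :: w) = ⇑(Φ j) ∘ wordMap Φ w from rfl, image_comp]
      calc Φ j '' (wordMap Φ w '' G) ⊆ Φ j '' interior (C 0) := image_mono ih
        _ ⊆ interior (Φ j '' C 0) := (hopen j).image_interior_subset _
        _ ⊆ interior (C 0) := by
            apply interior_mono
            rw [hC0, AffineMap.image_convexHull]
            exact convexHull_mono (hPhiF j)
  -- a convex set with nonempty interior meets every open set it touches in its interior
  have hconvex : ∀ (K U : Set (EuclideanSpace ℝ (Fin d))), Convex ℝ K →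
      (interior K).Nonempty → IsOpen U → ∀ x ∈ K, x ∈ U → (U ∩ interior K).Nonempty := by
    intro K U hK ⟨y₀, hy₀⟩ hU x hxK hxU
    have hcont : Continuous (fun t : ℝ => x + t • (y₀ - x)) :=
      continuous_const.add (continuous_id.smul continuous_const)
    have h0 : Filter.Tendsto (fun t : ℝ => x + t • (y₀ - x)) (nhds 0) (nhds x) := by
      have := hcont.tendsto 0
      simpa using this
    have hev : ∀ᶠ t in nhdsWithin (0:ℝ) (Ioi 0),
        ((x + t • (y₀ - x)) ∈ U ∧ t < 1) ∧ t ∈ Ioi (0:ℝ) := by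
      refine Filter.Eventually.and (Filter.Eventually.and ?_ ?_)
        eventually_mem_nhdsWithin
      · exact ((h0.mono_left nhdsWithin_le_nhds).eventually (hU.mem_nhds hxU))
      · exact (gt_mem_nhds (by norm_num : (0:ℝ) < 1)).filter_mono nhdsWithin_le_nhds
    obtain ⟨t, ⟨htU, ht1⟩, ht0⟩ := hev.exists
    exact ⟨x + t • (y₀ - x), htU,
      hK.add_smul_sub_mem_interior hxK hy₀ ⟨ht0, ht1.le⟩⟩
  -- main induction
  intro w
  induction w with
  | nil =>
    ext x
    simp only [wordMap, image_id, mem_inter_iff, mem_empty_iff_false, iff_false, not_and]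
    intro hxG hxF
    exact (interior_subset (hG hxG)).2 (hFC1 hxF)
  | cons j w ih =>
    ext x
    simp only [mem_inter_iff, mem_empty_iff_false, iff_false, not_and]
    intro hxW hxF
    have hxW' : x ∈ Φ j '' (wordMap Φ w '' G) := by
      rw [← image_comp]
      exact hxW
    obtain ⟨z, hz, hzx⟩ := hxW'
    -- x ∈ F = ⋃ Φ ℓ '' F
    rw [hFinv] at hxF
    obtain ⟨ℓ, ⟨y, hyF, hyx⟩⟩ := mem_iUnion.mp hxF
    by_cases hjl : ℓ = j
    · subst hjl
      have : z = y := (hbij ℓ).1 (hzx.trans hyx.symm)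
      subst this
      have : z ∈ wordMap Φ w '' G ∩ F := ⟨hz, hyF⟩
      rw [ih] at this
      exact this
    · -- tileset condition case
      have hxU : x ∈ interior (Φ j '' (C 0)) := by
        rw [← hzx]
        exact (hopen j).image_interior_subset _ ⟨z, hsub w hz, rfl⟩
      have hK : Convex ℝ (Φ ℓ '' (C 0)) := by
        rw [hC0]
        exact (convex_convexHull ℝ F).affine_image _
      have hKint : (interior (Φ ℓ '' (C 0))).Nonempty := by
        obtain ⟨p, hp⟩ := hne
        exact ⟨Φ ℓ p, (hopen ℓ).image_interior_subset _ ⟨p, hp, rfl⟩⟩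
      have hxK : x ∈ Φ ℓ '' (C 0) := ⟨y, hFC0 hyF, hyx⟩
      obtain ⟨q, hqU, hqK⟩ := hconvex (Φ ℓ '' (C 0)) (interior (Φ j '' (C 0)))
        hK hKint isOpen_interior x hxK hxU
      have : q ∈ interior (Φ j '' convexHull ℝ F) ∩ interior (Φ ℓ '' convexHull ℝ F) := by
        rw [← hC0]
        exact ⟨hqU, hqK⟩
      rw [hts j ℓ (Ne.symm hjl)] at this
      exact this
end
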